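/- A random variable p uniformly distributed on the discrete grid {1/m, 2/m, ..., m/m} is mirror-conservative: for all 0 < a₁ ≤ a₂ ≤ 1/2, P(p ∈ [a₁,a₂]) ≤ P(p ∈ [1-a₂, 1-a₁]). -/

import Mathlib

open MeasureTheory

/-- A random variable uniformly distributed on the grid `{1/m, ..., m/m}` is
mirror-conservative. -/
theorem discrete_uniform_mirror_conservative
    {Ω : Type*} [MeasurableSpace Ω] (μ : Measure Ω) [IsProbabilityMeasure μ]
    (m : ℕ) (hm : 0 < m)
    (p : Ω → ℝ) (hp : Measurable p)
    (hunif : ∀ k ∈ Finset.Icc 1 m, μ {ω | p ω = (k : ℝ) / m} = (m : ENNReal)⁻¹)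
    (hrange : ∀ ω, ∃ k ∈ Finset.Icc 1 m, p ω = (k : ℝ) / m) :
    ∀ a₁ a₂ : ℝ, 0 < a₁ → a₁ ≤ a₂ → a₂ ≤ 1 / 2 →
      μ {ω | p ω ∈ Set.Icc a₁ a₂} ≤ μ {ω | p ω ∈ Set.Icc (1 - a₂) (1 - a₁)} := by
  intro a₁ a₂ ha₁ h12 ha₂
  have hm' : (0:ℝ) < m := by exact_mod_cast hm
  classical
  have key : ∀ A : Set ℝ, μ {ω | p ω ∈ A} =
      (((Finset.Icc 1 m).filter (fun k : ℕ => (k:ℝ)/m ∈ A)).card : ENNReal) * (m : ENNReal)⁻¹ := by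
    intro A
    have hset : {ω | p ω ∈ A} =
        ⋃ k ∈ (Finset.Icc 1 m).filter (fun k : ℕ => (k:ℝ)/m ∈ A), {ω | p ω = (k:ℝ)/m} := by
      ext ω
      simp only [Set.mem_setOf_eq, Set.mem_iUnion, Finset.mem_filter]
      constructor
      · intro h
        obtain ⟨k, hk, hpk⟩ := hrange ω
        exact ⟨k, ⟨hk, hpk ▸ h⟩, hpk⟩
      · rintro ⟨k, ⟨hk, hA⟩, hpk⟩
        rw [hpk]; exact hA
    rw [hset, measure_biUnion_finset]
    · rw [Finset.sum_congr rfl (fun k hk => hunif k (Finset.mem_filter.mp hk).1)]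
      simp [Finset.sum_const, nsmul_eq_mul]
    · intro i hi j hj hij
      simp only [Finset.coe_filter, Set.mem_setOf_eq] at hi hj
      apply Set.disjoint_left.mpr
      intro ω h1 h2
      apply hij
      have heq : (i:ℝ)/m = (j:ℝ)/m := by
        have h1' : p ω = (i:ℝ)/m := h1
        have h2' : p ω = (j:ℝ)/m := h2
        rw [← h1', ← h2']
      field_simp at heq
      exact_mod_cast heq
    · intro k hk
      exact hp (measurableSet_singleton _)
  rw [key, key]
  apply mul_le_mul_left
  refine Nat.cast_le.mpr (Finset.card_le_card_of_injOn (fun k => m - k) ?_ ?_)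
  · intro k hk
    simp only [Finset.mem_coe, Finset.mem_filter, Finset.mem_Icc, Set.mem_Icc] at hk ⊢
    obtain ⟨⟨hk1, hkm⟩, hlo, hhi⟩ := hk
    have h2k : 2 * k ≤ m := by
      have h : (k:ℝ)/m ≤ 1/2 := le_trans hhi ha₂
      rw [div_le_div_iff₀ hm' (by norm_num)] at h
      have h2 : (2*k : ℝ) ≤ m := by linarith
      exact_mod_cast h2
    have hcast : ((m - k : ℕ) : ℝ) = (m : ℝ) - k := by
      push_cast [Nat.cast_sub hkm]; ring
    refine ⟨⟨by omega, by omega⟩, ?_, ?_⟩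
    · rw [hcast, sub_div, div_self (ne_of_gt hm')]
      linarith
    · rw [hcast, sub_div, div_self (ne_of_gt hm')]
      linarith
  · intro i hi j hj hij
    simp only [Finset.mem_coe, Finset.mem_filter, Finset.mem_Icc] at hi hj
    simp only at hij
    omega
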